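/- Let r_0 ∈ (0,1), C_rr > 0 and ε > 0, set a = C_rr (1 − r_0) r_0, and define f : ℝ → ℝ by f(ξ) = −ξ^2 ( 1 − a/(4π^2 ε^2 ξ^2 + 1) ). If a > 1, then ξ_u = √(√a − 1)/(2πε) satisfies f'(ξ_u) = 0, f(ξ_u) > 0, and f(ξ_u) ≥ f(ξ) for all ξ ∈ ℝ; i.e. ξ_u is the dominant (most unstable) wavenumber of the linearized single-species PDE model. -/

import Mathlib

open scoped Real

/-- **The dominant unstable wavenumber.** Let `r₀ ∈ (0,1)`, `C_rr > 0`, `ε > 0`, and set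
`a = C_rr (1 - r₀) r₀`. If `a > 1`, then the growth rate
`f(ξ) = -ξ² (1 - a/(4π²ε²ξ² + 1))` of the linearized single-species model attains at
`ξ_u = √(√a - 1)/(2πε)` a critical point (`f'(ξ_u) = 0`) with `f(ξ_u) > 0` and
`f(ξ) ≤ f(ξ_u)` for all `ξ`: `ξ_u` is the dominant (most unstable) wavenumber. -/
theorem dominant_unstable_wavenumber (r₀ C_rr ε : ℝ)
    (hr₀ : 0 < r₀) (hr₁ : r₀ < 1) (hC : 0 < C_rr) (hε : 0 < ε)
    (ha : 1 < C_rr * (1 - r₀) * r₀) :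
    let a : ℝ := C_rr * (1 - r₀) * r₀
    let f : ℝ → ℝ := fun ξ => -ξ ^ 2 * (1 - a / (4 * π ^ 2 * ε ^ 2 * ξ ^ 2 + 1))
    let ξu : ℝ := Real.sqrt (Real.sqrt a - 1) / (2 * π * ε)
    HasDerivAt f 0 ξu ∧ 0 < f ξu ∧ ∀ ξ, f ξ ≤ f ξu := by
  intro a f ξu
  have hπ : (0:ℝ) < π := Real.pi_pos
  have ha1 : (1:ℝ) < a := ha
  have ha0 : (0:ℝ) < a := lt_trans one_pos ha1
  set s := Real.sqrt a with hs
  have hs1 : 1 < s := by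
    have : Real.sqrt 1 < Real.sqrt a := Real.sqrt_lt_sqrt (by norm_num) ha1
    simpa using this
  have hs2 : s ^ 2 = a := Real.sq_sqrt ha0.le
  have hb : (0:ℝ) < 4 * π ^ 2 * ε ^ 2 := by positivity
  have hξu2 : ξu ^ 2 = (s - 1) / (4 * π ^ 2 * ε ^ 2) := by
    have h1 : ξu ^ 2 = (Real.sqrt (s - 1)) ^ 2 / (2 * π * ε) ^ 2 := by
      simp [ξu, div_pow]
      rfl
    rw [h1, Real.sq_sqrt (by linarith)]
    congr 1
    ring
  have hD : 4 * π ^ 2 * ε ^ 2 * ξu ^ 2 + 1 = s := by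
    rw [hξu2]
    field_simp
    ring
  have hspos : (0:ℝ) < s := by linarith
  have hsne : s ≠ 0 := ne_of_gt hspos
  have hξupos : 0 < ξu := by
    have : 0 < Real.sqrt (s - 1) := Real.sqrt_pos.mpr (by linarith)
    exact div_pos this (by positivity)
  -- f ξu = ξu^2 * (s - 1)
  have hfξu : f ξu = ξu ^ 2 * (s - 1) := by
    show -ξu ^ 2 * (1 - a / (4 * π ^ 2 * ε ^ 2 * ξu ^ 2 + 1)) = ξu ^ 2 * (s - 1)
    rw [hD]
    field_simp
    nlinarith [hs2]
  refine ⟨?_, ?_, ?_⟩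
  · -- derivative
    have h1 : HasDerivAt (fun ξ : ℝ => 4 * π ^ 2 * ε ^ 2 * ξ ^ 2 + 1)
        (4 * π ^ 2 * ε ^ 2 * (2 * ξu)) ξu := by
      have h := ((hasDerivAt_pow 2 ξu).const_mul (4 * π ^ 2 * ε ^ 2)).add_const 1
      refine h.congr_deriv ?_
      simp
    have hDne : 4 * π ^ 2 * ε ^ 2 * ξu ^ 2 + 1 ≠ 0 := by positivity
    have h2 : HasDerivAt (fun ξ : ℝ => a / (4 * π ^ 2 * ε ^ 2 * ξ ^ 2 + 1))
        ((0 * (4 * π ^ 2 * ε ^ 2 * ξu ^ 2 + 1) - a * (4 * π ^ 2 * ε ^ 2 * (2 * ξu))) /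
          (4 * π ^ 2 * ε ^ 2 * ξu ^ 2 + 1) ^ 2) ξu :=
      (hasDerivAt_const ξu a).div h1 hDne
    have h3 : HasDerivAt (fun ξ : ℝ => 1 - a / (4 * π ^ 2 * ε ^ 2 * ξ ^ 2 + 1))
        (0 - (0 * (4 * π ^ 2 * ε ^ 2 * ξu ^ 2 + 1) - a * (4 * π ^ 2 * ε ^ 2 * (2 * ξu))) /
          (4 * π ^ 2 * ε ^ 2 * ξu ^ 2 + 1) ^ 2) ξu :=
      (hasDerivAt_const ξu (1:ℝ)).sub h2
    have h4 : HasDerivAt (fun ξ : ℝ => -ξ ^ 2) (-(2 * ξu)) ξu := by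
      have h := (hasDerivAt_pow 2 ξu).neg
      refine h.congr_deriv ?_
      simp
    have h5 := h4.mul h3
    refine h5.congr_deriv (Eq.symm ?_)
    rw [hD, hs2]
    have hbx : 4 * π ^ 2 * ε ^ 2 * ξu ^ 2 = s - 1 := by linarith [hD]
    clear_value f ξu s a
    field_simp
    linear_combination (2*ξu*s*a) * hbx + (2*ξu*a) * hs2
  · rw [hfξu]
    nlinarith [hξupos, hs1]
  · intro ξ
    rw [hfξu]
    show -ξ ^ 2 * (1 - a / (4 * π ^ 2 * ε ^ 2 * ξ ^ 2 + 1)) ≤ ξu ^ 2 * (s - 1)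
    have hDp : (0:ℝ) < 4 * π ^ 2 * ε ^ 2 * ξ ^ 2 + 1 := by positivity
    have hq : a / (4 * π ^ 2 * ε ^ 2 * ξ ^ 2 + 1) * (4 * π ^ 2 * ε ^ 2 * ξ ^ 2 + 1) = a :=
      div_mul_cancel₀ a (ne_of_gt hDp)
    have hkey := sq_nonneg (4 * π ^ 2 * ε ^ 2 * ξ ^ 2 - (s - 1))
    rw [hξu2]
    rw [div_mul_eq_mul_div, le_div_iff₀ hb]
    nlinarith [hq, hkey, hDp, hs2, hb, mul_pos hb hDp,
      sq_nonneg ξ, mul_nonneg (sq_nonneg ξ) hb.le]
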